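/- If v is a factor of w having period q with |v| ≥ q + 3, then 3 divides q. -/

import Mathlib

/-- The four-letter alphabet `A₄ = {1,2,3,4}`; the value `k : Fin 4` represents letter `k+1`. -/
abbrev A4 := Fin 4

/-- The morphism `f` on letters: `f(1)=121, f(2)=123, f(3)=141, f(4)=142`
(letters `1,2,3,4` encoded as `0,1,2,3`). -/
def fm : A4 → List A4
  | 0 => [0, 1, 0]
  | 1 => [0, 1, 2]
  | 2 => [0, 3, 0]
  | 3 => [0, 3, 1]

/-- The morphism `f` extended to words by concatenation. -/
def fw (u : List A4) : List A4 := u.flatMap fm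

/-- The fixed point `w` of `f` starting with the letter `1`: since `|f^k(1)| = 3^k` and each
`f^k(1)` is a prefix of `f^(k+1)(1)`, the `n`-th letter of `w` is the `n`-th letter of
`f^(n+1)(1)`. -/
def w (n : ℕ) : A4 := ((fw^[n + 1]) [0]).getD n 0

/-- The finite word `t` occurs at position `i` in the infinite word `x`. -/
def OccursAt {α : Type*} (t : List α) (x : ℕ → α) (i : ℕ) : Prop :=
  t = (List.range t.length).map fun k => x (i + k)

/-- The finite word `v` is a factor of the infinite word `x`. -/
def FactorOf {α : Type*} (v : List α) (x : ℕ → α) : Prop :=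
  ∃ i, OccursAt v x i

/-- The finite word `v` has period `q ≥ 1`: `v(j) = v(j+q)` whenever `0 ≤ j < |v| - q`. -/
def HasPeriod {α : Type*} (v : List α) (q : ℕ) : Prop :=
  1 ≤ q ∧ ∀ j, j + q < v.length → v[j]? = v[j + q]?

/-- A word lies in `ker ψ` if each letter of `A₄` occurs in it a number of times
divisible by `4`. -/
def InKerPsi (u : List A4) : Prop := ∀ a : A4, 4 ∣ u.count a

/-- `q` is a kernel period of `v`: `1 ≤ q ≤ |v|`, `v` has period `q`, and the prefix of `v`
of length `q` lies in `ker ψ`. -/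
def KernelPeriod (v : List A4) (q : ℕ) : Prop :=
  q ≤ v.length ∧ HasPeriod v q ∧ InKerPsi (v.take q)


lemma fw_cons (a : A4) (t : List A4) : fw (a :: t) = fm a ++ fw t := by
  simp [fw]

lemma fm_length (a : A4) : (fm a).length = 3 := by
  fin_cases a <;> rfl

lemma fw_length (u : List A4) : (fw u).length = 3 * u.length := by
  induction u with
  | nil => rfl
  | cons a t ih => rw [fw_cons]; simp [fm_length, ih]; ring

lemma iter_length (k : ℕ) : ((fw^[k]) [0]).length = 3 ^ k := by
  induction k with
  | zero => rfl
  | succ k ih => rw [Function.iterate_succ_apply', fw_length, ih, pow_succ]; ring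

lemma fw_get0 (u : List A4) (m : ℕ) (hm : m < u.length) :
    (fw u)[3 * m]? = some 0 := by
  induction u generalizing m with
  | nil => simp at hm
  | cons a t ih =>
    rw [fw_cons]
    cases m with
    | zero =>
      rw [Nat.mul_zero]
      fin_cases a <;> rfl
    | succ m' =>
      rw [List.getElem?_append_right (by rw [fm_length]; omega), fm_length]
      have h3 : 3 * (m' + 1) - 3 = 3 * m' := by omega
      rw [h3]
      exact ih m' (by simpa using hm)

lemma fw_get1 (u : List A4) (m : ℕ) (hm : m < u.length) :
    (fw u)[3 * m + 1]? = some 1 ∨ (fw u)[3 * m + 1]? = some 3 := by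
  induction u generalizing m with
  | nil => simp at hm
  | cons a t ih =>
    rw [fw_cons]
    cases m with
    | zero =>
      rw [Nat.mul_zero, Nat.zero_add]
      fin_cases a
      · exact Or.inl rfl
      · exact Or.inl rfl
      · exact Or.inr rfl
      · exact Or.inr rfl
    | succ m' =>
      rw [List.getElem?_append_right (by rw [fm_length]; omega), fm_length]
      have h3 : 3 * (m' + 1) + 1 - 3 = 3 * m' + 1 := by omega
      rw [h3]
      exact ih m' (by simpa using hm)

lemma w_eq (n : ℕ) : some (w n) = ((fw^[n + 1]) [0])[n]? := by
  have hl : n < ((fw^[n + 1]) [0]).length := by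
    rw [iter_length]
    calc n < 3 ^ n := Nat.lt_pow_self (by norm_num)
    _ ≤ 3 ^ (n + 1) := Nat.pow_le_pow_right (by norm_num) (by omega)
  rw [w, List.getD_eq_getElem?_getD, List.getElem?_eq_getElem hl]
  rfl

lemma w_mod0 (n : ℕ) (h : n % 3 = 0) : w n = 0 := by
  have hm : n / 3 < ((fw^[n]) [0]).length := by
    rw [iter_length]
    calc n / 3 ≤ n := Nat.div_le_self n 3
    _ < 3 ^ n := Nat.lt_pow_self (by norm_num)
  have := fw_get0 ((fw^[n]) [0]) (n / 3) hm
  have hn3 : 3 * (n / 3) = n := by omega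
  rw [hn3] at this
  have hw := w_eq n
  rw [Function.iterate_succ_apply', this] at hw
  exact Option.some.inj hw

lemma w_mod1 (n : ℕ) (h : n % 3 = 1) : w n ≠ 0 := by
  have hm : n / 3 < ((fw^[n]) [0]).length := by
    rw [iter_length]
    calc n / 3 ≤ n := Nat.div_le_self n 3
    _ < 3 ^ n := Nat.lt_pow_self (by norm_num)
  have hg := fw_get1 ((fw^[n]) [0]) (n / 3) hm
  have hn3 : 3 * (n / 3) + 1 = n := by omega
  rw [hn3] at hg
  have hw := w_eq n
  rw [Function.iterate_succ_apply'] at hw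
  rcases hg with hg | hg <;> rw [hg] at hw <;>
    · have := Option.some.inj hw
      rw [this]; decide

/-- If `v` is a factor of `w` having period `q` with `|v| ≥ q + 3`, then `3 ∣ q`. -/
theorem stmt9 (v : List A4) (q : ℕ) (hfac : FactorOf v w) (hper : HasPeriod v q)
    (hlen : q + 3 ≤ v.length) : 3 ∣ q := by
  obtain ⟨i, hocc⟩ := hfac
  have hv : ∀ j, j < v.length → v[j]? = some (w (i + j)) := by
    intro j hj
    conv_lhs => rw [hocc]
    simp [List.getElem?_map, List.getElem?_range hj]
  have key : ∀ j, j < 3 → w (i + j) = w (i + j + q) := by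
    intro j hj
    have h1 : j + q < v.length := by omega
    have h2 := hper.2 j h1
    rw [hv j (by omega), hv (j + q) (by omega)] at h2
    have h3 := Option.some.inj h2
    rw [h3]; ring_nf
  have hq3 : q % 3 = 0 ∨ q % 3 = 1 ∨ q % 3 = 2 := by omega
  rcases hq3 with h | h | h
  · exact Nat.dvd_of_mod_eq_zero h
  · exfalso
    obtain ⟨j, hj3, hjm⟩ : ∃ j, j < 3 ∧ (i + j) % 3 = 0 :=
      ⟨(3 - i % 3) % 3, by omega, by omega⟩
    have h0 := w_mod0 (i + j) hjm
    have h1 := w_mod1 (i + j + q) (by omega)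
    exact h1 (by rw [← key j hj3, h0])
  · exfalso
    obtain ⟨j, hj3, hjm⟩ : ∃ j, j < 3 ∧ (i + j) % 3 = 1 :=
      ⟨(4 - i % 3) % 3, by omega, by omega⟩
    have h1 := w_mod1 (i + j) hjm
    have h0 := w_mod0 (i + j + q) (by omega)
    exact h1 (by rw [key j hj3, h0])
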